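/- Let r ≥ 1 be an integer and M > 0. There exists a constant C = C(M, r) such that the following holds: if n ≥ 1 and φ₁, …, φₙ : [0,1] → [0,1] are C^r diffeomorphisms of [0,1] onto itself satisfying Σ_{i=1}^n ‖φᵢ − Id‖_{C^r} ≤ M, then ‖φₙ ∘ φ_{n−1} ∘ ⋯ ∘ φ₁‖_{C^r} ≤ C. -/

import Mathlib

open Set

/-- The `C^m` norm of a real function `g` on a set `S ⊆ ℝ`: the supremum of
`|g^{(j)}(p)|` over `0 ≤ j ≤ m` and `p ∈ S`. -/
noncomputable def cNorm1 (m : ℕ) (g : ℝ → ℝ) (S : Set ℝ) : ℝ :=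
  sSup {x | ∃ j : ℕ, j ≤ m ∧ ∃ p ∈ S, x = |iteratedDerivWithin j g S p|}

/-- `compSeq φ n = φ (n-1) ∘ ⋯ ∘ φ 1 ∘ φ 0` (and `compSeq φ 0 = id`). -/
def compSeq (φ : ℕ → ℝ → ℝ) : ℕ → ℝ → ℝ
  | 0 => id
  | n + 1 => φ n ∘ compSeq φ n

local notation "S" => Icc (0:ℝ) 1

lemma uD : UniqueDiffOn ℝ S := uniqueDiffOn_Icc (by norm_num)

lemma exists_unif_bound {m : ℕ} {g : ℝ → ℝ} (hg : ContDiffOn ℝ (m : ℕ) g S) :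
    ∃ L : ℝ, ∀ j ≤ m, ∀ p ∈ S, |iteratedDerivWithin j g S p| ≤ L := by
  have h : ∀ j : ℕ, ∃ L : ℝ, ∀ p ∈ S, j ≤ m → |iteratedDerivWithin j g S p| ≤ L := by
    intro j
    by_cases hj : j ≤ m
    · obtain ⟨L, hL⟩ := (isCompact_Icc (a := (0:ℝ)) (b := 1)).exists_bound_of_continuousOn
        (hg.continuousOn_iteratedDerivWithin (by exact_mod_cast hj) uD)
      exact ⟨L, fun p hp _ => by simpa [Real.norm_eq_abs] using hL p hp⟩
    · exact ⟨0, fun p hp hjm => absurd hjm hj⟩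
  choose L hL using h
  refine ⟨(Finset.range (m + 1)).sup' ⟨0, by simp⟩ L, fun j hj p hp => ?_⟩
  exact (hL j p hp hj).trans (Finset.le_sup' L (by simp; omega))

lemma le_cNorm1 {m : ℕ} {g : ℝ → ℝ} (hg : ContDiffOn ℝ (m : ℕ) g S) {j : ℕ} (hj : j ≤ m)
    {p : ℝ} (hp : p ∈ S) : |iteratedDerivWithin j g S p| ≤ cNorm1 m g S := by
  obtain ⟨L, hL⟩ := exists_unif_bound hg
  refine le_csSup ⟨L, ?_⟩ ⟨j, hj, p, hp, rfl⟩
  rintro x ⟨k, hk, q, hq, rfl⟩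
  exact hL k hk q hq

lemma cNorm1_nonneg {m : ℕ} {g : ℝ → ℝ} (hg : ContDiffOn ℝ (m : ℕ) g S) :
    0 ≤ cNorm1 m g S :=
  le_trans (abs_nonneg _) (le_cNorm1 hg (Nat.zero_le m) (by norm_num : (0:ℝ) ∈ S))

lemma cNorm1_le {m : ℕ} {g : ℝ → ℝ} {C : ℝ} (hC : 0 ≤ C)
    (h : ∀ j ≤ m, ∀ p ∈ S, |iteratedDerivWithin j g S p| ≤ C) : cNorm1 m g S ≤ C := by
  refine Real.sSup_le ?_ hC
  rintro x ⟨k, hk, q, hq, rfl⟩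
  exact h k hk q hq

lemma compSeq_mapsTo {φ : ℕ → ℝ → ℝ} {n : ℕ} (h : ∀ i < n, MapsTo (φ i) S S) :
    MapsTo (compSeq φ n) S S := by
  induction n with
  | zero => exact fun x hx => hx
  | succ n ih =>
    exact (h n (Nat.lt_succ_self n)).comp (ih fun i hi => h i (hi.trans (Nat.lt_succ_self n)))

lemma compSeq_contDiffOn {φ : ℕ → ℝ → ℝ} {n : ℕ} {r : ℕ}
    (h1 : ∀ i < n, ContDiffOn ℝ (r : ℕ) (φ i) S) (h2 : ∀ i < n, MapsTo (φ i) S S) :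
    ContDiffOn ℝ (r : ℕ) (compSeq φ n) S := by
  induction n with
  | zero => exact contDiffOn_id
  | succ n ih =>
    exact (h1 n (Nat.lt_succ_self n)).comp
      (ih (fun i hi => h1 i (hi.trans (Nat.lt_succ_self n)))
          (fun i hi => h2 i (hi.trans (Nat.lt_succ_self n))))
      (compSeq_mapsTo fun i hi => h2 i (hi.trans (Nat.lt_succ_self n)))

lemma id_deriv_bound (k : ℕ) {p : ℝ} (hp : p ∈ S) :
    |iteratedDerivWithin k (@id ℝ) S p| ≤ 1 := by
  match k with
  | 0 =>
    simp only [iteratedDerivWithin_zero, id]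
    exact abs_le.2 ⟨by linarith [hp.1], hp.2⟩
  | 1 =>
    rw [iteratedDerivWithin_one, derivWithin_id p S (uD p hp)]
    norm_num
  | (m + 2) =>
    rw [iteratedDerivWithin_succ']
    have he : Set.EqOn (derivWithin (@id ℝ) S) (fun _ => (1:ℝ)) S := fun x hx =>
      derivWithin_id x S (uD x hx)
    rw [iteratedDerivWithin_congr he hp]
    have : |iteratedDerivWithin (m + 1) (fun _ => (1:ℝ)) S p| =
        ‖iteratedFDerivWithin ℝ (m + 1) (fun _ => (1:ℝ)) S p‖ := by
      rw [norm_iteratedFDerivWithin_eq_norm_iteratedDerivWithin, Real.norm_eq_abs]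
    rw [this, iteratedFDerivWithin_const_of_ne (Nat.succ_ne_zero m) (1:ℝ) S]
    simp

lemma step_bound {r j : ℕ} (hj1 : j + 1 ≤ r) {K : ℝ} (hK1 : 1 ≤ K)
    {f g : ℝ → ℝ}
    (hf : ContDiffOn ℝ (r : ℕ) f S) (hg : ContDiffOn ℝ (r : ℕ) g S)
    (hmg : MapsTo g S S)
    {ε : ℝ} (hε : ∀ k ≤ r, ∀ q ∈ S, |iteratedDerivWithin k (fun x => f x - x) S q| ≤ ε)
    (hgK : ∀ k ≤ j, ∀ q ∈ S, |iteratedDerivWithin k g S q| ≤ K)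
    {A : ℝ} (hA : ∀ q ∈ S, |iteratedDerivWithin (j + 1) g S q| ≤ A) (hA1 : 1 ≤ A)
    {p : ℝ} (hp : p ∈ S) :
    |iteratedDerivWithin (j + 1) (f ∘ g) S p| ≤
      (1 + ε) * A + (2 ^ j * j.factorial * K ^ (j + 1)) * ε := by
  have hε0 : 0 ≤ ε :=
    le_trans (abs_nonneg _) (hε 0 (Nat.zero_le r) 0 (by norm_num))
  have hK0 : (0:ℝ) < K := lt_of_lt_of_le one_pos hK1
  set ψ : ℝ → ℝ := fun x => f x - x with hψdef
  have hψ : ContDiffOn ℝ (r : ℕ) ψ S := hf.sub contDiffOn_id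
  have hψg : ContDiffOn ℝ (r : ℕ) (ψ ∘ g) S := hψ.comp hg hmg
  have hcast : ((j : WithTop ℕ∞) + 1) ≤ (r : WithTop ℕ∞) := by exact_mod_cast hj1
  have hcastj : ((j : WithTop ℕ∞)) ≤ (r : WithTop ℕ∞) := by exact_mod_cast hj1.trans' (Nat.le_succ j)
  have hcast1 : (1 : WithTop ℕ∞) ≤ (r : WithTop ℕ∞) := by exact_mod_cast Nat.one_le_iff_ne_zero.2 (by omega)
  -- decompose f ∘ g = g + ψ ∘ g
  have hfg : f ∘ g = g + (ψ ∘ g) := by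
    funext x; simp [Function.comp, hψdef]
  have hsplit : iteratedDerivWithin (j + 1) (f ∘ g) S p =
      iteratedDerivWithin (j + 1) g S p + iteratedDerivWithin (j + 1) (ψ ∘ g) S p := by
    rw [hfg]
    exact iteratedDerivWithin_add hp uD
      ((hg.contDiffWithinAt hp).of_le (by exact_mod_cast hj1)) ((hψg.contDiffWithinAt hp).of_le (by exact_mod_cast hj1))
  -- the derivative of ψ ∘ g as a product
  have hdψ : ContDiffOn ℝ (j : ℕ) (derivWithin ψ S) S := hψ.derivWithin uD (by exact_mod_cast hj1)
  have hdg : ContDiffOn ℝ (j : ℕ) (derivWithin g S) S := hg.derivWithin uD (by exact_mod_cast hj1)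
  have hgj : ContDiffOn ℝ (j : ℕ) g S := hg.of_le hcastj
  have heq : Set.EqOn (derivWithin (ψ ∘ g) S)
      (fun x => derivWithin ψ S (g x) * derivWithin g S x) S := by
    intro x hx
    exact derivWithin_comp x ((hψ.differentiableOn (by exact_mod_cast (show r ≠ 0 by omega))) (g x) (hmg hx))
      ((hg.differentiableOn (by exact_mod_cast (show r ≠ 0 by omega))) x hx) hmg
  -- bounds on iterated derivatives of (derivWithin ψ S) ∘ g
  have hu : ∀ k ≤ j, ‖iteratedFDerivWithin ℝ k (fun x => derivWithin ψ S (g x)) S p‖ ≤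
      (k.factorial : ℝ) * ε * K ^ k := by
    intro k hk
    have := norm_iteratedFDerivWithin_comp_le (𝕜 := ℝ) (g := derivWithin ψ S) (f := g)
      (n := k) (N := (j : WithTop ℕ∞)) hdψ hgj (by exact_mod_cast hk) uD uD hmg hp
      (C := ε) (D := K) ?_ ?_
    · exact this
    · intro l hl
      rw [norm_iteratedFDerivWithin_eq_norm_iteratedDerivWithin, Real.norm_eq_abs,
        ← iteratedDerivWithin_succ']
      exact hε (l + 1) (by omega) (g p) (hmg hp)
    · intro l hl1 hl2
      rw [norm_iteratedFDerivWithin_eq_norm_iteratedDerivWithin, Real.norm_eq_abs]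
      exact (hgK l (by omega) p hp).trans (le_self_pow₀ hK1 (by omega))
  -- bound for the top term of ψ ∘ g
  have hT : |iteratedDerivWithin (j + 1) (ψ ∘ g) S p| ≤
      ε * A + (2 ^ j * j.factorial * K ^ (j + 1)) * ε := by
    rw [iteratedDerivWithin_succ', iteratedDerivWithin_congr heq hp,
      ← Real.norm_eq_abs, ← norm_iteratedFDerivWithin_eq_norm_iteratedDerivWithin]
    have hmul := norm_iteratedFDerivWithin_mul_le (𝕜 := ℝ)
      (f := fun x => derivWithin ψ S (g x)) (g := derivWithin g S)
      (N := (j : WithTop ℕ∞)) (hdψ.comp hgj hmg) hdg uD hp (n := j) le_rfl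
    refine hmul.trans ?_
    -- bound the sum
    rw [Finset.sum_range_succ']
    have hterm0 : (j.choose 0 : ℝ) * ‖iteratedFDerivWithin ℝ 0 (fun x => derivWithin ψ S (g x)) S p‖ *
        ‖iteratedFDerivWithin ℝ (j - 0) (derivWithin g S) S p‖ ≤ ε * A := by
      have h1 : ‖iteratedFDerivWithin ℝ 0 (fun x => derivWithin ψ S (g x)) S p‖ ≤ ε := by
        simpa using hu 0 (Nat.zero_le j)
      have h2 : ‖iteratedFDerivWithin ℝ (j - 0) (derivWithin g S) S p‖ ≤ A := by
        rw [Nat.sub_zero, norm_iteratedFDerivWithin_eq_norm_iteratedDerivWithin, Real.norm_eq_abs,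
          ← iteratedDerivWithin_succ']
        exact hA p hp
      calc (j.choose 0 : ℝ) * ‖iteratedFDerivWithin ℝ 0 (fun x => derivWithin ψ S (g x)) S p‖ *
            ‖iteratedFDerivWithin ℝ (j - 0) (derivWithin g S) S p‖
          = ‖iteratedFDerivWithin ℝ 0 (fun x => derivWithin ψ S (g x)) S p‖ *
            ‖iteratedFDerivWithin ℝ (j - 0) (derivWithin g S) S p‖ := by simp
        _ ≤ ε * A := mul_le_mul h1 h2 (norm_nonneg _) hε0
    have htermk : ∀ i ∈ Finset.range j,
        (j.choose (i + 1) : ℝ) * ‖iteratedFDerivWithin ℝ (i + 1) (fun x => derivWithin ψ S (g x)) S p‖ *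
          ‖iteratedFDerivWithin ℝ (j - (i + 1)) (derivWithin g S) S p‖ ≤
        (j.choose (i + 1) : ℝ) * ((j.factorial : ℝ) * ε * K ^ j) * K := by
      intro i hi
      have hij : i + 1 ≤ j := Finset.mem_range.1 hi
      have h1 : ‖iteratedFDerivWithin ℝ (i + 1) (fun x => derivWithin ψ S (g x)) S p‖ ≤
          (j.factorial : ℝ) * ε * K ^ j := by
        refine (hu (i + 1) hij).trans ?_
        have hf1 : ((i+1).factorial : ℝ) ≤ (j.factorial : ℝ) := by
          exact_mod_cast Nat.factorial_le hij
        have hp1 : K ^ (i + 1) ≤ K ^ j := pow_le_pow_right₀ hK1 hij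
        have := mul_le_mul (mul_le_mul hf1 le_rfl hε0 (by positivity)) hp1 (by positivity) (by positivity)
        exact this
      have h2 : ‖iteratedFDerivWithin ℝ (j - (i + 1)) (derivWithin g S) S p‖ ≤ K := by
        rw [norm_iteratedFDerivWithin_eq_norm_iteratedDerivWithin, Real.norm_eq_abs,
          ← iteratedDerivWithin_succ']
        exact hgK (j - (i + 1) + 1) (by omega) p hp
      exact mul_le_mul (mul_le_mul le_rfl h1 (norm_nonneg _) (by positivity)) h2 (norm_nonneg _)
        (by positivity)
    have hsum2 : ∑ i ∈ Finset.range j,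
        (j.choose (i + 1) : ℝ) * ‖iteratedFDerivWithin ℝ (i + 1) (fun x => derivWithin ψ S (g x)) S p‖ *
          ‖iteratedFDerivWithin ℝ (j - (i + 1)) (derivWithin g S) S p‖ ≤
        (2 ^ j * j.factorial * K ^ (j + 1)) * ε := by
      refine (Finset.sum_le_sum htermk).trans ?_
      rw [← Finset.sum_mul, ← Finset.sum_mul]
      have hch : (∑ i ∈ Finset.range j, (j.choose (i + 1) : ℝ)) ≤ 2 ^ j := by
        have h1 : ∑ i ∈ Finset.range j, j.choose (i + 1) ≤ 2 ^ j := by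
          have e1 := Nat.sum_range_choose j
          have e2 := Finset.sum_range_succ' (fun k => j.choose k) j
          omega
        exact_mod_cast h1
      have hnn : (0:ℝ) ≤ (j.factorial : ℝ) * ε * K ^ j * K := by positivity
      calc (∑ i ∈ Finset.range j, (j.choose (i + 1) : ℝ)) * ((j.factorial : ℝ) * ε * K ^ j) * K
          ≤ (2 ^ j) * ((j.factorial : ℝ) * ε * K ^ j) * K := by
            apply mul_le_mul_of_nonneg_right _ (by positivity)
            exact mul_le_mul_of_nonneg_right hch (by positivity)
        _ = (2 ^ j * j.factorial * K ^ (j + 1)) * ε := by ring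
    calc (∑ i ∈ Finset.range j,
            (j.choose (i + 1) : ℝ) * ‖iteratedFDerivWithin ℝ (i + 1) (fun x => derivWithin ψ S (g x)) S p‖ *
              ‖iteratedFDerivWithin ℝ (j - (i + 1)) (derivWithin g S) S p‖) +
          (j.choose 0 : ℝ) * ‖iteratedFDerivWithin ℝ 0 (fun x => derivWithin ψ S (g x)) S p‖ *
            ‖iteratedFDerivWithin ℝ (j - 0) (derivWithin g S) S p‖
        ≤ (2 ^ j * j.factorial * K ^ (j + 1)) * ε + ε * A := add_le_add hsum2 hterm0
      _ = ε * A + (2 ^ j * j.factorial * K ^ (j + 1)) * ε := by ring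
  have hmain := hA p hp
  rw [hsplit] at *
  calc |iteratedDerivWithin (j + 1) g S p + iteratedDerivWithin (j + 1) (ψ ∘ g) S p|
      ≤ |iteratedDerivWithin (j + 1) g S p| + |iteratedDerivWithin (j + 1) (ψ ∘ g) S p| := abs_add_le _ _
    _ ≤ A + (ε * A + (2 ^ j * j.factorial * K ^ (j + 1)) * ε) := add_le_add hmain hT
    _ = (1 + ε) * A + (2 ^ j * j.factorial * K ^ (j + 1)) * ε := by ring

lemma main_bound (r : ℕ) (M : ℝ) (hM : 0 < M) (j : ℕ) (hj : j ≤ r) :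
    ∃ K : ℝ, 1 ≤ K ∧ ∀ (n : ℕ) (φ : ℕ → ℝ → ℝ),
      (∀ i < n, ContDiffOn ℝ (r : ℕ) (φ i) S) →
      (∀ i < n, MapsTo (φ i) S S) →
      ((∑ i ∈ Finset.range n, cNorm1 r (fun x => φ i x - x) S) ≤ M) →
      ∀ k ≤ j, ∀ p ∈ S, |iteratedDerivWithin k (compSeq φ n) S p| ≤ K := by
  induction j with
  | zero =>
    refine ⟨1, le_rfl, fun n φ h1 h2 _ k hk p hp => ?_⟩
    interval_cases k
    rw [iteratedDerivWithin_zero]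
    have := compSeq_mapsTo h2 hp
    exact abs_le.2 ⟨by linarith [this.1], this.2⟩
  | succ j IH =>
    obtain ⟨K, hK1, hK⟩ := IH (by omega)
    set c : ℝ := 2 ^ j * j.factorial * K ^ (j + 1) with hcdef
    have hc1 : (1:ℝ) ≤ c := by
      have h2 : (1:ℝ) ≤ 2 ^ j := one_le_pow₀ (by norm_num)
      have h3 : (1:ℝ) ≤ (j.factorial : ℝ) := by exact_mod_cast j.factorial_pos
      have h4 : (1:ℝ) ≤ K ^ (j + 1) := one_le_pow₀ hK1
      have h23 : (1:ℝ) ≤ 2 ^ j * (j.factorial : ℝ) := by nlinarith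
      calc (1:ℝ) = 1 * 1 := by ring
        _ ≤ (2 ^ j * (j.factorial : ℝ)) * K ^ (j + 1) :=
            mul_le_mul h23 h4 zero_le_one (by positivity)
        _ = c := by rw [hcdef]
    refine ⟨max K (Real.exp (c * M) * (1 + c)), le_trans hK1 (le_max_left _ _), ?_⟩
    intro n φ h1 h2 hsum k hk p hp
    -- basic facts
    have hψc : ∀ i < n, ContDiffOn ℝ (r : ℕ) (fun x => φ i x - x) S := fun i hi =>
      (h1 i hi).sub contDiffOn_id
    have hε0 : ∀ i < n, 0 ≤ cNorm1 r (fun x => φ i x - x) S := fun i hi =>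
      cNorm1_nonneg (hψc i hi)
    have hεsum : ∀ i ≤ n, (∑ l ∈ Finset.range i, cNorm1 r (fun x => φ l x - x) S) ≤ M := by
      intro i hi
      refine le_trans (Finset.sum_le_sum_of_subset_of_nonneg
        (Finset.range_subset_range.2 hi) ?_) hsum
      intro l hl _
      exact hε0 l (Finset.mem_range.1 hl)
    have hKd : ∀ i ≤ n, ∀ m ≤ j, ∀ q ∈ S, |iteratedDerivWithin m (compSeq φ i) S q| ≤ K := by
      intro i hi
      exact hK i φ (fun l hl => h1 l (lt_of_lt_of_le hl hi))
        (fun l hl => h2 l (lt_of_lt_of_le hl hi)) (hεsum i hi)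
    -- case split on k
    rcases Nat.lt_or_ge k (j + 1) with hk' | hk'
    · exact le_trans (hKd n le_rfl k (by omega) p hp) (le_max_left _ _)
    have hkj : k = j + 1 := by omega
    subst hkj
    -- Gronwall-type induction
    have claim : ∀ i ≤ n, ∀ q ∈ S, |iteratedDerivWithin (j + 1) (compSeq φ i) S q| ≤
        Real.exp (c * ∑ l ∈ Finset.range i, cNorm1 r (fun x => φ l x - x) S) * (1 + c) - c := by
      intro i
      induction i with
      | zero =>
        intro _ q hq
        simpa [compSeq] using le_trans (id_deriv_bound (j + 1) hq) (by simp)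
      | succ i ihi =>
        intro hin q hq
        have hiltn : i < n := by omega
        set ε : ℝ := cNorm1 r (fun x => φ i x - x) S with hεdef
        set Sg : ℝ := ∑ l ∈ Finset.range i, cNorm1 r (fun x => φ l x - x) S with hSgdef
        have hE1 : (1:ℝ) ≤ Real.exp (c * Sg) := by
          apply Real.one_le_exp
          have hs0 : 0 ≤ Sg := Finset.sum_nonneg fun l hl => hε0 l (by
            have := Finset.mem_range.1 hl; omega)
          exact mul_nonneg (by linarith) hs0
        have hA1 : (1:ℝ) ≤ Real.exp (c * Sg) * (1 + c) - c := by nlinarith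
        have hεnn : 0 ≤ ε := hε0 i hiltn
        have hstep := step_bound (r := r) (j := j) (by omega) hK1
          (h1 i hiltn) (compSeq_contDiffOn (fun l hl => h1 l (by omega)) (fun l hl => h2 l (by omega)))
          (compSeq_mapsTo (fun l hl => h2 l (by omega)))
          (ε := ε) (fun m hm q' hq' => le_cNorm1 (hψc i hiltn) hm hq')
          (fun m hm q' hq' => hKd i (by omega) m hm q' hq')
          (A := Real.exp (c * Sg) * (1 + c) - c) (fun q' hq' => ihi (by omega) q' hq') hA1 hq
        have hcomp : compSeq φ (i + 1) = φ i ∘ compSeq φ i := rfl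
        rw [hcomp, Finset.sum_range_succ, ← hSgdef, ← hεdef]
        refine hstep.trans ?_
        -- arithmetic
        have hexp : c * ε + 1 ≤ Real.exp (c * ε) := Real.add_one_le_exp _
        have hmul : Real.exp (c * Sg) * Real.exp (c * ε) = Real.exp (c * (Sg + ε)) := by
          rw [← Real.exp_add]; ring_nf
        rw [← hmul]
        have hεc : 1 + ε ≤ Real.exp (c * ε) := by nlinarith
        nlinarith [mul_le_mul hεc (le_refl (Real.exp (c * Sg) * (1 + c)))
          (by positivity) (by positivity : (0:ℝ) ≤ Real.exp (c * ε)),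
          Real.exp_pos (c * Sg), Real.exp_pos (c * ε)]
    refine le_trans (claim n le_rfl p hp) (le_trans ?_ (le_max_right _ _))
    have := hεsum n le_rfl
    have hexpmono : Real.exp (c * ∑ l ∈ Finset.range n, cNorm1 r (fun x => φ l x - x) S) ≤
        Real.exp (c * M) := by
      apply Real.exp_le_exp.2
      have hc0 : (0:ℝ) < c := lt_of_lt_of_le one_pos hc1
      exact mul_le_mul_of_nonneg_left this (le_of_lt hc0)
    nlinarith

/-- Lemma C.4 (Avila–de Melo–Martens): a composition of `C^r` diffeomorphisms of `[0,1]`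
whose total `C^r`-distance to the identity is at most `M` has `C^r` norm bounded by a
constant `C = C(M, r)` independent of the number of factors. -/
theorem stmt4 (r : ℕ) (hr : 1 ≤ r) (M : ℝ) (hM : 0 < M) :
    ∃ C : ℝ, 0 < C ∧
      ∀ (n : ℕ) (φ : ℕ → ℝ → ℝ), 1 ≤ n →
        (∀ i < n, ContDiffOn ℝ (r : ℕ) (φ i) (Icc (0 : ℝ) 1)) →
        (∀ i < n, BijOn (φ i) (Icc (0 : ℝ) 1) (Icc (0 : ℝ) 1)) →
        (∀ i < n, ∀ x ∈ Icc (0 : ℝ) 1, derivWithin (φ i) (Icc (0 : ℝ) 1) x ≠ 0) →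
        (∑ i ∈ Finset.range n, cNorm1 r (fun x => φ i x - x) (Icc (0 : ℝ) 1)) ≤ M →
        cNorm1 r (compSeq φ n) (Icc (0 : ℝ) 1) ≤ C := by
  obtain ⟨K, hK1, hK⟩ := main_bound r M hM r le_rfl
  refine ⟨K, lt_of_lt_of_le one_pos hK1, ?_⟩
  intro n φ hn h1 h2 _h3 hsum
  refine cNorm1_le (by linarith) ?_
  intro j hj p hp
  exact hK n φ h1 (fun i hi => (h2 i hi).mapsTo) hsum j hj p hp
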